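/- Suppose λ ⋖ μ ⋖ ν is a path of length 2 in the Young graph such that the contents satisfy c(ν/μ) - c(μ/λ) ≠ ±1. Then there exists a unique Young diagram μ' with μ' ≠ μ, λ ⋖ μ' ⋖ ν, ν/μ' = μ/λ and μ'/λ = ν/μ. Conversely, if c(ν/μ) - c(μ/λ) = ±1 then μ is the unique diagram with λ ⋖ μ ⋖ ν. -/

import Mathlib

open Finset

namespace YG

/-- `Covers μ l` : the Young diagram `l` is obtained from `μ` by adding one box. -/
def Covers (μ l : YoungDiagram) : Prop := μ ≤ l ∧ l.card = μ.card + 1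

/-- The content `j - i` of a cell `(i, j)`. -/
def content (c : ℕ × ℕ) : ℤ := (c.2 : ℤ) - (c.1 : ℤ)

/-- The content of the unique box of `l \ μ` when `Covers μ l`. -/
def addedContent (μ l : YoungDiagram) : ℤ := ∑ c ∈ l.cells \ μ.cells, content c

/-- The removable corner cells of a Young diagram; their contents are the local
maxima `y_i` of the profile. -/
def removableCells (l : YoungDiagram) : Finset (ℕ × ℕ) :=
  l.cells.filter (fun c => (c.1, c.2 + 1) ∉ l ∧ (c.1 + 1, c.2) ∉ l)

/-- The addable cells of a Young diagram; their contents are the local minima `x_i`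
of the profile. -/
def addableCells (l : YoungDiagram) : Finset (ℕ × ℕ) :=
  ((Finset.range (l.card + 1)) ×ˢ (Finset.range (l.card + 1))).filter
    (fun c => c ∉ l ∧ (c.1 = 0 ∨ (c.1 - 1, c.2) ∈ l) ∧ (c.2 = 0 ∨ (c.1, c.2 - 1) ∈ l))

/-- The transition probability `p↑(l, ·)` at an addable content `x = x_i`:
`∏_j (x_i - y_j) / ∏_{j ≠ i} (x_i - x_j)`. -/
noncomputable def pUpAt (l : YoungDiagram) (x : ℤ) : ℝ :=
  (∏ r ∈ removableCells l, ((x : ℝ) - (content r : ℝ))) /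
    (∏ a ∈ (addableCells l).filter (fun a => content a ≠ x), ((x : ℝ) - (content a : ℝ)))

/-- The cotransition probability `p↓(l, ·)` at a removable content `y = y_i`:
`-(1/|l|) ∏_j (y_i - x_j) / ∏_{j ≠ i} (y_i - y_j)`. -/
noncomputable def pDownAt (l : YoungDiagram) (y : ℤ) : ℝ :=
  -(1 / (l.card : ℝ)) *
    ((∏ a ∈ addableCells l, ((y : ℝ) - (content a : ℝ))) /
      (∏ r ∈ (removableCells l).filter (fun r => content r ≠ y), ((y : ℝ) - (content r : ℝ))))

/-- `p↑(μ, l)` for `μ ⋖ l`. -/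
noncomputable def pUp (μ l : YoungDiagram) : ℝ := pUpAt μ (addedContent μ l)

/-- `p↓(l, μ)` for `μ ⋖ l`. -/
noncomputable def pDown (l μ : YoungDiagram) : ℝ := pDownAt l (addedContent μ l)

/-- The Plancherel harmonic function
`f_Pl(l) = (1/|l|!) ∏_{(i,j) ∈ l} (l_i + l'_j - i - j + 1)` (hook products, written with
0-based indices). -/
noncomputable def fPl (l : YoungDiagram) : ℝ :=
  (∏ c ∈ l.cells, ((l.rowLen c.1 : ℝ) + (l.colLen c.2 : ℝ) - (c.1 : ℝ) - (c.2 : ℝ) - 1)) /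
    (Nat.factorial l.card : ℝ)

end YG

open YG Finset

namespace YG

lemma covers_box {l μ : YoungDiagram} (h : Covers l μ) :
    ∃ a, μ.cells \ l.cells = {a} := by
  have hsub : l.cells ⊆ μ.cells := h.1
  have hcard : (μ.cells \ l.cells).card = 1 := by
    rw [Finset.card_sdiff_of_subset hsub]
    have h2 : μ.cells.card = l.cells.card + 1 := h.2
    omega
  exact Finset.card_eq_one.mp hcard

lemma addedContent_eq {l μ : YoungDiagram} {a : ℕ × ℕ} (h : μ.cells \ l.cells = {a}) :
    addedContent l μ = content a := by
  rw [addedContent, h, Finset.sum_singleton]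

lemma cells_eq_insert {l μ : YoungDiagram} (hsub : l.cells ⊆ μ.cells) {a : ℕ × ℕ}
    (h : μ.cells \ l.cells = {a}) : μ.cells = insert a l.cells := by
  have h2 := Finset.union_sdiff_of_subset hsub
  rw [h] at h2
  rw [Finset.insert_eq, Finset.union_comm]
  exact h2.symm

end YG

/-- Paths of length 2 in the Young graph: if `λ ⋖ μ ⋖ ν` with
`c(ν/μ) - c(μ/λ) ≠ ±1` then there is a unique Young diagram `μ' ≠ μ` with
`λ ⋖ μ' ⋖ ν`, `ν/μ' = μ/λ` and `μ'/λ = ν/μ`; and if `c(ν/μ) - c(μ/λ) = ±1` then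
`μ` is the unique intermediate diagram. -/
theorem stmt8 (l μ ν : YoungDiagram) (h1 : Covers l μ) (h2 : Covers μ ν) :
    ((addedContent μ ν - addedContent l μ ≠ 1 ∧ addedContent μ ν - addedContent l μ ≠ -1) →
      ∃! μ' : YoungDiagram, μ' ≠ μ ∧ Covers l μ' ∧ Covers μ' ν ∧
        ν.cells \ μ'.cells = μ.cells \ l.cells ∧ μ'.cells \ l.cells = ν.cells \ μ.cells) ∧
    ((addedContent μ ν - addedContent l μ = 1 ∨ addedContent μ ν - addedContent l μ = -1) →
      ∀ μ'' : YoungDiagram, Covers l μ'' → Covers μ'' ν → μ'' = μ) := by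
  obtain ⟨⟨a1, a2⟩, ha⟩ := covers_box h1
  obtain ⟨⟨b1, b2⟩, hb⟩ := covers_box h2
  have hlμ : l.cells ⊆ μ.cells := h1.1
  have hμν : μ.cells ⊆ ν.cells := h2.1
  have haμ : (a1, a2) ∈ μ.cells := by
    have := ha ▸ Finset.mem_singleton_self (a1, a2); exact (Finset.mem_sdiff.mp this).1
  have hal : (a1, a2) ∉ l.cells := by
    have := ha ▸ Finset.mem_singleton_self (a1, a2); exact (Finset.mem_sdiff.mp this).2
  have hbν : (b1, b2) ∈ ν.cells := by
    have := hb ▸ Finset.mem_singleton_self (b1, b2); exact (Finset.mem_sdiff.mp this).1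
  have hbμ : (b1, b2) ∉ μ.cells := by
    have := hb ▸ Finset.mem_singleton_self (b1, b2); exact (Finset.mem_sdiff.mp this).2
  have haν : (a1, a2) ∈ ν.cells := hμν haμ
  have hbl : (b1, b2) ∉ l.cells := fun h => hbμ (hlμ h)
  have hμcells : μ.cells = insert (a1, a2) l.cells := cells_eq_insert hlμ ha
  have hνcells : ν.cells = insert (b1, b2) μ.cells := cells_eq_insert hμν hb
  -- any cell of ν other than a, b lies in l
  have key : ∀ c : ℕ × ℕ, c ∈ ν.cells → c ≠ (a1, a2) → c ≠ (b1, b2) → c ∈ l.cells := by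
    intro c hc hca hcb
    rw [hνcells, Finset.mem_insert] at hc
    rcases hc with h | h
    · exact absurd h hcb
    · rw [hμcells, Finset.mem_insert] at h
      rcases h with h | h
      · exact absurd h hca
      · exact h
  -- b is not (weakly) up-left of a
  have notble : ¬(b1 ≤ a1 ∧ b2 ≤ a2) := by
    rintro ⟨h1', h2'⟩
    exact hbμ (μ.up_left_mem h1' h2' haμ)
  -- a is not strictly up-left of b
  have notstrict : ¬(a1 < b1 ∧ a2 < b2) := by
    rintro ⟨h1', h2'⟩
    have hc : (a1, b2) ∈ ν.cells := ν.up_left_mem (le_of_lt h1') le_rfl hbν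
    have hcl : (a1, b2) ∈ l.cells := by
      apply key _ hc
      · intro h; exact absurd (congrArg Prod.snd h) (by simp; omega)
      · intro h; exact absurd (congrArg Prod.fst h) (by simp; omega)
    exact hal (l.up_left_mem le_rfl (le_of_lt h2') hcl)
  have hab : (a1, a2) ≠ (b1, b2) := fun h => hbμ (h ▸ haμ)
  have same_row : a1 = b1 → b2 = a2 + 1 := by
    intro hrow
    have h1' : a2 < b2 := by
      rcases lt_or_ge a2 b2 with h | h
      · exact h
      · exfalso
        rcases eq_or_lt_of_le h with h' | h'
        · exact hab (by rw [hrow, h'])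
        · exact notble ⟨le_of_eq hrow.symm, le_of_lt h'⟩
    by_contra hne
    have h2' : a2 + 1 < b2 := by omega
    have hc : (a1, a2 + 1) ∈ ν.cells := ν.up_left_mem (le_of_eq hrow) (by omega) hbν
    have hcl : (a1, a2 + 1) ∈ l.cells := by
      apply key _ hc
      · intro h; exact absurd (congrArg Prod.snd h) (by simp)
      · intro h; exact absurd (congrArg Prod.snd h) (by simp; omega)
    exact hal (l.up_left_mem le_rfl (by omega) hcl)
  have same_col : a2 = b2 → b1 = a1 + 1 := by
    intro hcol
    have h1' : a1 < b1 := by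
      rcases lt_or_ge a1 b1 with h | h
      · exact h
      · exfalso
        rcases eq_or_lt_of_le h with h' | h'
        · exact hab (by rw [hcol, h'])
        · exact notble ⟨le_of_lt h', le_of_eq hcol.symm⟩
    by_contra hne
    have h2' : a1 + 1 < b1 := by omega
    have hc : (a1 + 1, a2) ∈ ν.cells := ν.up_left_mem (by omega) (le_of_eq hcol) hbν
    have hcl : (a1 + 1, a2) ∈ l.cells := by
      apply key _ hc
      · intro h; exact absurd (congrArg Prod.fst h) (by simp)
      · intro h; exact absurd (congrArg Prod.fst h) (by simp; omega)
    exact hal (l.up_left_mem (by omega) le_rfl hcl)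
  have hdiff : addedContent μ ν - addedContent l μ =
      ((b2 : ℤ) - b1) - ((a2 : ℤ) - a1) := by
    rw [addedContent_eq ha, addedContent_eq hb, content, content]
  constructor
  · -- contents differ by more than 1 : two intermediate diagrams
    rintro ⟨hne1, hne2⟩
    have hi : a1 ≠ b1 := by
      intro h
      have := same_row h
      apply hne1
      rw [hdiff]
      omega
    have hj : a2 ≠ b2 := by
      intro h
      have := same_col h
      apply hne2
      rw [hdiff]
      omega
    have nle : ¬(a1 ≤ b1 ∧ a2 ≤ b2) := by
      rintro ⟨h1', h2'⟩
      exact notstrict ⟨lt_of_le_of_ne h1' hi, lt_of_le_of_ne h2' hj⟩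
    -- the candidate diagram
    have hls : IsLowerSet ((insert (b1, b2) l.cells : Finset (ℕ × ℕ)) : Set (ℕ × ℕ)) := by
      intro p q hqp hp
      simp only [Finset.coe_insert, Set.mem_insert_iff, Finset.mem_coe] at hp ⊢
      rcases hp with rfl | hp
      · by_cases hqb : q = (b1, b2)
        · exact Or.inl hqb
        · right
          have hqν : q ∈ ν.cells := ν.isLowerSet hqp hbν
          apply key _ hqν _ hqb
          rintro rfl
          exact nle ⟨hqp.1, hqp.2⟩
      · exact Or.inr (l.isLowerSet hqp hp)
    set μ' : YoungDiagram := ⟨insert (b1, b2) l.cells, hls⟩ with hμ'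
    have hμ'cells : μ'.cells = insert (b1, b2) l.cells := rfl
    have hbμ' : (b1, b2) ∈ μ'.cells := Finset.mem_insert_self _ _
    have hcov1 : Covers l μ' := by
      constructor
      · exact fun c hc => Finset.mem_insert_of_mem hc
      · show μ'.cells.card = l.cells.card + 1
        rw [hμ'cells, Finset.card_insert_of_notMem hbl]
    have hcov2 : Covers μ' ν := by
      constructor
      · intro c hc
        rw [← YoungDiagram.mem_cells, hμ'cells, Finset.mem_insert] at hc
        rcases hc with rfl | hc
        · exact hbν
        · exact hμν (hlμ hc)
      · show ν.cells.card = μ'.cells.card + 1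
        have e1 : ν.cells.card = μ.cells.card + 1 := h2.2
        have e2 : μ.cells.card = l.cells.card + 1 := h1.2
        have e3 : μ'.cells.card = l.cells.card + 1 := hcov1.2
        omega
    have hd1 : ν.cells \ μ'.cells = μ.cells \ l.cells := by
      rw [ha]
      ext c
      simp only [Finset.mem_sdiff, hμ'cells, Finset.mem_insert, Finset.mem_singleton,
        not_or]
      constructor
      · rintro ⟨hc, hcb, hcl⟩
        by_contra hca
        exact hcl (key c hc hca hcb)
      · rintro rfl
        exact ⟨haν, fun h => hab h, hal⟩
    have hd2 : μ'.cells \ l.cells = ν.cells \ μ.cells := by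
      rw [hb, hμ'cells]
      ext c
      simp only [Finset.mem_sdiff, Finset.mem_insert, Finset.mem_singleton]
      constructor
      · rintro ⟨rfl | hc, hcl⟩
        · rfl
        · exact absurd hc hcl
      · rintro rfl
        exact ⟨Or.inl rfl, hbl⟩
    refine ⟨μ', ⟨?_, hcov1, hcov2, hd1, hd2⟩, ?_⟩
    · intro h
      exact hbμ (h ▸ hbμ')
    · rintro y ⟨hyne, hy1, hy2, -, -⟩
      obtain ⟨c, hc⟩ := covers_box hy1
      have hcy : c ∈ y.cells := (Finset.mem_sdiff.mp (hc ▸ Finset.mem_singleton_self c)).1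
      have hcl : c ∉ l.cells := (Finset.mem_sdiff.mp (hc ▸ Finset.mem_singleton_self c)).2
      have hcν : c ∈ ν.cells := hy2.1 hcy
      have hcells : y.cells = insert c l.cells := cells_eq_insert hy1.1 hc
      have hcb : c = (b1, b2) := by
        by_contra hcb
        by_cases hca : c = (a1, a2)
        · exact hyne (YoungDiagram.ext (by rw [hcells, hca, hμcells]))
        · exact hcl (key c hcν hca hcb)
      exact YoungDiagram.ext (by rw [hcells, hcb, hμ'cells])
  · -- contents differ by exactly 1 : unique intermediate diagram
    intro hpm μ'' hc1 hc2
    obtain ⟨c, hc⟩ := covers_box hc1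
    have hcy : c ∈ μ''.cells := (Finset.mem_sdiff.mp (hc ▸ Finset.mem_singleton_self c)).1
    have hcl : c ∉ l.cells := (Finset.mem_sdiff.mp (hc ▸ Finset.mem_singleton_self c)).2
    have hcν : c ∈ ν.cells := hc2.1 hcy
    have hcells : μ''.cells = insert c l.cells := cells_eq_insert hc1.1 hc
    by_cases hca : c = (a1, a2)
    · exact YoungDiagram.ext (by rw [hcells, hca, hμcells])
    · exfalso
      have hcb : c = (b1, b2) := by
        by_contra hcb
        exact hcl (key c hcν hca hcb)
      -- in the ±1 case a is weakly up-left of b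
    -- show a1 ≤ b1 ∧ a2 ≤ b2
      have hle : a1 ≤ b1 ∧ a2 ≤ b2 := by
        rcases lt_trichotomy a1 b1 with h | h | h
        · -- a1 < b1 : then a2 ≥ b2; contents differ by ≥ 2 in abs unless a2 = b2
          rcases lt_trichotomy a2 b2 with h' | h' | h'
          · exact absurd ⟨h, h'⟩ notstrict
          · exact ⟨le_of_lt h, le_of_eq h'⟩
          · exfalso
            rw [hdiff] at hpm
            rcases hpm with hpm | hpm <;> omega
        · -- a1 = b1 : same row, b2 = a2 + 1
          have := same_row h
          exact ⟨le_of_eq h, by omega⟩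
        · -- b1 < a1 : then a2 < b2 (else b ≤ a); contents differ by ≥ 2
          have h' : a2 < b2 := by
            rcases lt_or_ge a2 b2 with h' | h'
            · exact h'
            · exact absurd ⟨le_of_lt h, h'⟩ notble
          exfalso
          rw [hdiff] at hpm
          rcases hpm with hpm | hpm <;> omega
      have haμ'' : (a1, a2) ∈ μ''.cells := μ''.up_left_mem hle.1 hle.2 (hcb ▸ hcy)
      rw [hcells, hcb, Finset.mem_insert] at haμ''
      rcases haμ'' with h | h
      · exact hab h
      · exact hal h
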